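/- Characterization of HT-pairs for the disjunctive consequence ndao: for a disjunctively normal program P and consistent pair (x,y), the condition IC^l_P(x,y) ⪯^S {x} holds if and only if for every rule ⋁Δ ← ⋀Θ₁ ∧ ⋀{¬β | β ∈ Θ₂} in P, whenever Θ₁ ⊆ x and Θ₂ ∩ y = ∅, we have x ∩ Δ ≠ ∅. -/
import Mathlib


structure Rule (A : Type*) where
  head : Set A
  pos : Set A
  neg : Set A
  hne : head.Nonempty

def HDl {A : Type*} (P : Set (Rule A)) (x y : Set A) : Set (Set A) :=
  {Δ | ∃ r ∈ P, r.head = Δ ∧ r.pos ⊆ x ∧ ∀ b ∈ r.neg, b ∉ y}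

def ICl {A : Type*} (P : Set (Rule A)) (x y : Set A) : Set (Set A) :=
  {z | z ⊆ ⋃₀ HDl P x y ∧ ∀ Δ ∈ HDl P x y, (z ∩ Δ).Nonempty}

theorem ht_pair_characterization {A : Type*} (P : Set (Rule A)) (hP : P.Finite)
    (hfin : ∀ r ∈ P, r.head.Finite ∧ r.pos.Finite ∧ r.neg.Finite)
    (x y : Set A) (hxy : x ⊆ y) :
    (∃ w ∈ ICl P x y, w ⊆ x) ↔
      ∀ r ∈ P, r.pos ⊆ x → (∀ b ∈ r.neg, b ∉ y) → (x ∩ r.head).Nonempty := by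
  constructor
  · rintro ⟨w, ⟨-, hw⟩, hwx⟩ r hr hpos hneg
    obtain ⟨a, haw, haΔ⟩ := hw r.head ⟨r, hr, rfl, hpos, hneg⟩
    exact ⟨a, hwx haw, haΔ⟩
  · intro h
    refine ⟨x ∩ ⋃₀ HDl P x y, ⟨fun a ha => ha.2, ?_⟩, fun a ha => ha.1⟩
    rintro Δ hΔ
    obtain ⟨r, hr, rfl, hpos, hneg⟩ := hΔ
    obtain ⟨a, hax, haΔ⟩ := h r hr hpos hneg
    exact ⟨a, ⟨hax, ⟨r.head, ⟨r, hr, rfl, hpos, hneg⟩, haΔ⟩⟩, haΔ⟩
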